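/- Let β be a real number and let m be a positive integer. For every real x > 1, the m-th derivative of the function x ↦ (ln x)^{β} (real power) satisfies ((ln x)^{β})^{(m)} = x^{-m} · Σ_{i=1}^{m} s(m,i)·(β)_i·(ln x)^{β-i}. -/

import Mathlib

/-- Signed Stirling numbers of the first kind `s(n, k)`. -/
def stirling1 : ℕ → ℕ → ℤ
  | 0, 0 => 1
  | 0, _ + 1 => 0
  | n + 1, 0 => -(n : ℤ) * stirling1 n 0
  | n + 1, k + 1 => stirling1 n k - (n : ℤ) * stirling1 n (k + 1)

/-- Falling factorial `(β)_i = β (β-1) ⋯ (β-i+1)`, with `(β)_0 = 1`. -/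
noncomputable def fall (β : ℝ) (i : ℕ) : ℝ := ∏ j ∈ Finset.range i, (β - j)

lemma stirling1_zero : ∀ n : ℕ, 0 < n → stirling1 n 0 = 0
  | 1, _ => by simp [stirling1]
  | n + 2, _ => by
      rw [show stirling1 (n+2) 0 = -(↑(n+1) : ℤ) * stirling1 (n+1) 0 from rfl,
        stirling1_zero (n+1) (Nat.succ_pos n), mul_zero]

lemma stirling1_of_lt : ∀ n k : ℕ, n < k → stirling1 n k = 0
  | 0, _ + 1, _ => rfl
  | n + 1, k + 1, h => by
      rw [show stirling1 (n+1) (k+1) = stirling1 n k - (n:ℤ) * stirling1 n (k+1) from rfl,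
        stirling1_of_lt n k (by omega), stirling1_of_lt n (k+1) (by omega)]
      ring

lemma fall_succ (β : ℝ) (i : ℕ) : fall β (i + 1) = fall β i * (β - i) :=
  Finset.prod_range_succ _ _

lemma shift (F : ℕ → ℝ) (m : ℕ) :
    ∑ i ∈ Finset.Icc 1 (m+1), F i = ∑ j ∈ Finset.Icc 0 m, F (j+1) := by
  rw [← Finset.map_add_right_Icc 0 m 1, Finset.sum_map]; rfl

lemma icc_zero (m : ℕ) : Finset.Icc 0 m = insert 0 (Finset.Icc 1 m) := by
  ext i; simp; omega

lemma sum_id (β L : ℝ) (m : ℕ) (hm : 0 < m) :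
    ∑ i ∈ Finset.Icc 1 (m+1), (stirling1 (m+1) i : ℝ) * fall β i * L ^ (β - i) =
      (-(m:ℝ)) * ∑ i ∈ Finset.Icc 1 m, (stirling1 m i : ℝ) * fall β i * L ^ (β - i)
      + ∑ i ∈ Finset.Icc 1 m,
          (stirling1 m i : ℝ) * fall β i * ((β - i) * L ^ (β - i - 1)) := by
  rw [shift]
  have h1 : ∀ j ∈ Finset.Icc 0 m,
      (stirling1 (m+1) (j+1) : ℝ) * fall β (j+1) * L ^ (β - (j+1 : ℕ)) =
        (stirling1 m j : ℝ) * fall β (j+1) * L ^ (β - j - 1)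
          - (m : ℝ) * ((stirling1 m (j+1) : ℝ) * fall β (j+1) * L ^ (β - (j+1 : ℕ))) := by
    intro j _
    rw [show stirling1 (m+1) (j+1) = stirling1 m j - (m:ℤ) * stirling1 m (j+1) from rfl]
    have : β - ((j:ℕ) + 1 : ℕ) = β - j - 1 := by push_cast; ring
    rw [this]; push_cast; ring
  rw [Finset.sum_congr rfl h1, Finset.sum_sub_distrib]
  have hA : ∑ j ∈ Finset.Icc 0 m, (stirling1 m j : ℝ) * fall β (j+1) * L ^ (β - j - 1)
      = ∑ i ∈ Finset.Icc 1 m, (stirling1 m i : ℝ) * fall β i * ((β - i) * L ^ (β - i - 1)) := by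
    rw [icc_zero, Finset.sum_insert (by simp), stirling1_zero m hm]
    simp only [Int.cast_zero, zero_mul, zero_add]
    apply Finset.sum_congr rfl
    intro j _
    rw [fall_succ]; ring
  have hB : ∑ j ∈ Finset.Icc 0 m,
        (m : ℝ) * ((stirling1 m (j+1) : ℝ) * fall β (j+1) * L ^ (β - (j+1 : ℕ)))
      = (m : ℝ) * ∑ i ∈ Finset.Icc 1 m, (stirling1 m i : ℝ) * fall β i * L ^ (β - i) := by
    rw [← Finset.mul_sum]
    congr 1
    rw [← shift (fun i => (stirling1 m i : ℝ) * fall β i * L ^ (β - i)),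
      Finset.sum_Icc_succ_top (by omega), stirling1_of_lt m (m+1) (by omega)]
    push_cast; ring
  rw [hA, hB]; ring

theorem iteratedDeriv_log_rpow (β : ℝ) (m : ℕ) (hm : 0 < m) :
    ∀ x : ℝ, 1 < x →
      iteratedDeriv m (fun y : ℝ => Real.log y ^ β) x =
        x ^ (-(m : ℤ)) * ∑ i ∈ Finset.Icc 1 m,
          (stirling1 m i : ℝ) * fall β i * Real.log x ^ (β - i) := by
  induction m, hm using Nat.le_induction with
  | base =>
      intro x hx
      have hx0 : x ≠ 0 := by positivity
      have hlog : HasDerivAt (fun y : ℝ => Real.log y ^ β)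
          (x⁻¹ * β * Real.log x ^ (β - 1)) x :=
        (Real.hasDerivAt_log hx0).rpow_const (Or.inl (Real.log_pos hx).ne')
      rw [iteratedDeriv_one, hlog.deriv]
      simp [stirling1, fall, zpow_neg]
      ring
  | succ m hm ih =>
      intro x hx
      have hx0 : (0:ℝ) < x := lt_trans zero_lt_one hx
      have hxne : x ≠ 0 := ne_of_gt hx0
      set L := Real.log x with hL
      -- derivative of the closed form at x
      have hterm : ∀ i ∈ Finset.Icc 1 m,
          HasDerivAt (fun y : ℝ => (stirling1 m i : ℝ) * fall β i * Real.log y ^ (β - i))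
            ((stirling1 m i : ℝ) * fall β i * (x⁻¹ * (β - i) * L ^ (β - i - 1))) x := by
        intro i _
        exact ((Real.hasDerivAt_log hxne).rpow_const
          (Or.inl (Real.log_pos hx).ne')).const_mul _
      have hsum : HasDerivAt
          (fun y : ℝ => ∑ i ∈ Finset.Icc 1 m,
            (stirling1 m i : ℝ) * fall β i * Real.log y ^ (β - i))
          (∑ i ∈ Finset.Icc 1 m,
            (stirling1 m i : ℝ) * fall β i * (x⁻¹ * (β - i) * L ^ (β - i - 1))) x :=
        HasDerivAt.fun_sum hterm
      have hz : HasDerivAt (fun y : ℝ => y ^ (-(m:ℤ)))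
          ((-(m:ℤ) : ℝ) * x ^ (-(m:ℤ) - 1)) x := by
        simpa using hasDerivAt_zpow (-(m:ℤ)) x (Or.inl hxne)
      have hg : HasDerivAt
          (fun y : ℝ => y ^ (-(m:ℤ)) * ∑ i ∈ Finset.Icc 1 m,
            (stirling1 m i : ℝ) * fall β i * Real.log y ^ (β - i))
          ((-(m:ℤ) : ℝ) * x ^ (-(m:ℤ) - 1) *
              (∑ i ∈ Finset.Icc 1 m, (stirling1 m i : ℝ) * fall β i * L ^ (β - i))
            + x ^ (-(m:ℤ)) * ∑ i ∈ Finset.Icc 1 m,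
              (stirling1 m i : ℝ) * fall β i * (x⁻¹ * (β - i) * L ^ (β - i - 1))) x :=
        hz.mul hsum
      have hev : iteratedDeriv m (fun y : ℝ => Real.log y ^ β) =ᶠ[nhds x]
          (fun y : ℝ => y ^ (-(m:ℤ)) * ∑ i ∈ Finset.Icc 1 m,
            (stirling1 m i : ℝ) * fall β i * Real.log y ^ (β - i)) := by
        filter_upwards [Ioi_mem_nhds hx] with y hy using ih y hy
      rw [iteratedDeriv_succ, hev.deriv_eq, hg.deriv]
      -- now algebra
      have hxpow : x ^ (-(m:ℤ)) = x ^ (-(m:ℤ) - 1) * x := by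
        rw [← zpow_add_one₀ hxne]; ring_nf
      have hstep : x ^ (-(m:ℤ)) * ∑ i ∈ Finset.Icc 1 m,
            (stirling1 m i : ℝ) * fall β i * (x⁻¹ * (β - i) * L ^ (β - i - 1))
          = x ^ (-(m:ℤ) - 1) * ∑ i ∈ Finset.Icc 1 m,
            (stirling1 m i : ℝ) * fall β i * ((β - i) * L ^ (β - i - 1)) := by
        rw [hxpow, Finset.mul_sum, Finset.mul_sum]
        apply Finset.sum_congr rfl
        intro i _
        field_simp
      rw [hstep]
      have hexp : -((m:ℤ) + 1) = -(m:ℤ) - 1 := by ring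
      rw [show (-(↑(m+1):ℤ)) = -(m:ℤ) - 1 by push_cast; ring]
      rw [sum_id β L m hm]
      push_cast
      ring
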